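/- Let Γ ∈ M_{5×5}(ZMod 2) be the adjacency matrix of the 5-cycle (Γ_{ij} = 1 if i − j ≡ ±1 (mod 5), else 0), and for j ∈ {1, …, 5} define C_j ∈ M_{5×5}(ZMod 2) by (C_j)_{ab} = Γ_{ab} if exactly one of a, b equals j, and (C_j)_{ab} = 0 otherwise. Then there exist no p ∈ {0, 1, …, 5}, no matrices K_1, …, K_5 ∈ M_{p×(5−p)}(ZMod 2), and no invertible Q ∈ M_{5×5}(ZMod 2) such that for every j, Q·C_j·Qᵀ equals the block matrix with upper-left p×p block 0, upper-right block K_j, lower-left block K_jᵀ, and lower-right (5−p)×(5−p) block 0. -/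

import Mathlib

open Matrix

namespace Stmt17

/-- Adjacency matrix of the 5-cycle over `ZMod 2`: `Γ_{ij} = 1` iff `i − j ≡ ±1 (mod 5)`. -/
def cycAdj : Matrix (Fin 5) (Fin 5) (ZMod 2) :=
  fun i j => if (i.val + 1) % 5 = j.val ∨ (j.val + 1) % 5 = i.val then 1 else 0

/-- The commutation matrices of the 5-qubit ring graph state with one qubit per party:
`(C_j)_{ab} = Γ_{ab}` if exactly one of `a, b` equals `j`, else `0`. -/
def ringC (j : Fin 5) : Matrix (Fin 5) (Fin 5) (ZMod 2) :=
  fun a b => if (a = j ∧ b ≠ j) ∨ (b = j ∧ a ≠ j) then cycAdj a b else 0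

set_option maxRecDepth 100000 in
set_option synthInstance.maxSize 4000 in
set_option synthInstance.maxHeartbeats 2000000 in
set_option maxHeartbeats 4000000 in
/-- Any three vectors pairwise isotropic for all five forms are linearly dependent. -/
private lemma key' : ∀ x0 x1 x2 x3 x4 y0 y1 y2 y3 y4 : ZMod 2,
    x0*(y4+y1) + y0*(x4+x1) = 0 → x1*(y0+y2) + y1*(x0+x2) = 0 →
    x2*(y1+y3) + y2*(x1+x3) = 0 → x3*(y2+y4) + y3*(x2+x4) = 0 →
    x4*(y3+y0) + y4*(x3+x0) = 0 →
    ∀ z0 z1 z2 z3 z4 : ZMod 2,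
    x0*(z4+z1) + z0*(x4+x1) = 0 → x1*(z0+z2) + z1*(x0+x2) = 0 →
    x2*(z1+z3) + z2*(x1+x3) = 0 → x3*(z2+z4) + z3*(x2+x4) = 0 →
    x4*(z3+z0) + z4*(x3+x0) = 0 →
    y0*(z4+z1) + z0*(y4+y1) = 0 → y1*(z0+z2) + z1*(y0+y2) = 0 →
    y2*(z1+z3) + z2*(y1+y3) = 0 → y3*(z2+z4) + z3*(y2+y4) = 0 →
    y4*(z3+z0) + z4*(y3+y0) = 0 →
    (x0=0∧x1=0∧x2=0∧x3=0∧x4=0) ∨ (y0=0∧y1=0∧y2=0∧y3=0∧y4=0) ∨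
    (z0=0∧z1=0∧z2=0∧z3=0∧z4=0) ∨
    (x0=y0∧x1=y1∧x2=y2∧x3=y3∧x4=y4) ∨ (x0=z0∧x1=z1∧x2=z2∧x3=z3∧x4=z4) ∨
    (y0=z0∧y1=z1∧y2=z2∧y3=z3∧y4=z4) ∨
    (x0+y0+z0=0∧x1+y1+z1=0∧x2+y2+z2=0∧x3+y3+z3=0∧x4+y4+z4=0) := by decide

/-- Expand the bilinear forms of `ringC` into explicit polynomial identities. -/
private lemma expand (x y : Fin 5 → ZMod 2) (h : ∀ j, x ⬝ᵥ (ringC j).mulVec y = 0) :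
    x 0*(y 4+y 1) + y 0*(x 4+x 1) = 0 ∧ x 1*(y 0+y 2) + y 1*(x 0+x 2) = 0 ∧
    x 2*(y 1+y 3) + y 2*(x 1+x 3) = 0 ∧ x 3*(y 2+y 4) + y 3*(x 2+x 4) = 0 ∧
    x 4*(y 3+y 0) + y 4*(x 3+x 0) = 0 := by
  have h0 := h 0; have h1 := h 1; have h2 := h 2; have h3 := h 3; have h4 := h 4
  simp (config := { decide := true }) [dotProduct, Matrix.mulVec, ringC, cycAdj,
    Fin.sum_univ_five] at h0 h1 h2 h3 h4
  refine ⟨by linear_combination h0, by linear_combination h1, by linear_combination h2,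
    by linear_combination h3, by linear_combination h4⟩

private lemma three_rows (Q : Matrix (Fin 5) (Fin 5) (ZMod 2)) (hQ : IsUnit Q)
    (i1 i2 i3 : Fin 5) (h12 : i1 ≠ i2) (h13 : i1 ≠ i3) (h23 : i2 ≠ i3)
    (cxy : ∀ j, Q i1 ⬝ᵥ (ringC j).mulVec (Q i2) = 0)
    (cxz : ∀ j, Q i1 ⬝ᵥ (ringC j).mulVec (Q i3) = 0)
    (cyz : ∀ j, Q i2 ⬝ᵥ (ringC j).mulVec (Q i3) = 0) : False := by
  have hinj : ∀ v : Fin 5 → ZMod 2, v ᵥ* Q = 0 → v = 0 := by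
    intro v hv
    have h1 : v ᵥ* Q ᵥ* (↑hQ.unit⁻¹ : Matrix (Fin 5) (Fin 5) (ZMod 2)) = 0 := by
      rw [hv, Matrix.zero_vecMul]
    rwa [Matrix.vecMul_vecMul, hQ.mul_val_inv, Matrix.vecMul_one] at h1
  have row0 : ∀ i : Fin 5, Q i ≠ 0 := by
    intro i hi
    have hv : Pi.single i (1 : ZMod 2) ᵥ* Q = 0 := by
      rw [Matrix.single_one_vecMul]; exact hi
    have := congrFun (hinj _ hv) i
    simp at this
  have roweq : ∀ i k : Fin 5, i ≠ k → Q i ≠ Q k := by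
    intro i k hik he
    have hv : (Pi.single i (1 : ZMod 2) + Pi.single k 1) ᵥ* Q = 0 := by
      rw [Matrix.add_vecMul, Matrix.single_one_vecMul, Matrix.single_one_vecMul]
      show Q i + Q k = 0
      rw [he,
        CharTwo.add_self_eq_zero]
    have := congrFun (hinj _ hv) i
    simp [Pi.single_eq_of_ne hik, Pi.single_eq_same] at this
  have rowsum : Q i1 + Q i2 + Q i3 ≠ 0 := by
    intro he
    have hv : (Pi.single i1 (1 : ZMod 2) + Pi.single i2 1 + Pi.single i3 1) ᵥ* Q = 0 := by
      rw [Matrix.add_vecMul, Matrix.add_vecMul, Matrix.single_one_vecMul,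
        Matrix.single_one_vecMul, Matrix.single_one_vecMul]; exact he
    have := congrFun (hinj _ hv) i1
    simp [Pi.single_eq_of_ne h12, Pi.single_eq_of_ne h13, Pi.single_eq_same] at this
  obtain ⟨e1, e2, e3, e4, e5⟩ := expand _ _ cxy
  obtain ⟨f1, f2, f3, f4, f5⟩ := expand _ _ cxz
  obtain ⟨g1, g2, g3, g4, g5⟩ := expand _ _ cyz
  rcases key' _ _ _ _ _ _ _ _ _ _ e1 e2 e3 e4 e5 _ _ _ _ _ f1 f2 f3 f4 f5 g1 g2 g3 g4 g5 with
    h | h | h | h | h | h | h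
  · exact row0 i1 (by funext t; fin_cases t <;> simp [h.1, h.2.1, h.2.2.1, h.2.2.2.1, h.2.2.2.2])
  · exact row0 i2 (by funext t; fin_cases t <;> simp [h.1, h.2.1, h.2.2.1, h.2.2.2.1, h.2.2.2.2])
  · exact row0 i3 (by funext t; fin_cases t <;> simp [h.1, h.2.1, h.2.2.1, h.2.2.2.1, h.2.2.2.2])
  · exact roweq i1 i2 h12
      (by funext t; fin_cases t <;> simp [h.1, h.2.1, h.2.2.1, h.2.2.2.1, h.2.2.2.2])
  · exact roweq i1 i3 h13
      (by funext t; fin_cases t <;> simp [h.1, h.2.1, h.2.2.1, h.2.2.2.1, h.2.2.2.2])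
  · exact roweq i2 i3 h23
      (by funext t; fin_cases t <;> simp [h.1, h.2.1, h.2.2.1, h.2.2.2.1, h.2.2.2.2])
  · refine rowsum (funext fun t => ?_)
    fin_cases t <;> simp only [Pi.add_apply, Pi.zero_apply] <;>
      first
        | exact h.1 | exact h.2.1 | exact h.2.2.1 | exact h.2.2.2.1 | exact h.2.2.2.2

/-- The commutation matrices of the 5-qubit ring graph state are not simultaneously
congruent to a neutral tuple, i.e. to a tuple of the block form `[[0, K_j],[K_jᵀ, 0]]`. -/
theorem ring_not_congruent_to_neutral :
    ¬ ∃ (p : ℕ) (hp : p ≤ 5) (K : Fin 5 → Matrix (Fin p) (Fin (5 - p)) (ZMod 2))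
        (Q : Matrix (Fin 5) (Fin 5) (ZMod 2)),
        IsUnit Q ∧
          ∀ j : Fin 5,
            Q * ringC j * Qᵀ =
              (Matrix.fromBlocks 0 (K j) (K j)ᵀ 0).submatrix
                (finSumFinEquiv.trans (finCongr (Nat.add_sub_cancel' hp))).symm
                (finSumFinEquiv.trans (finCongr (Nat.add_sub_cancel' hp))).symm := by
  rintro ⟨p, hp, K, Q, hQ, hblk⟩
  set e := finSumFinEquiv.trans (finCongr (Nat.add_sub_cancel' hp)) with he
  have hentry : ∀ (j : Fin 5) (i k : Fin 5),
      Q i ⬝ᵥ (ringC j).mulVec (Q k) = (Q * ringC j * Qᵀ) i k := by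
    intro j i k
    simp only [Matrix.mul_apply, Matrix.mulVec, dotProduct, Matrix.transpose_apply,
      Finset.sum_mul, Finset.mul_sum, mul_assoc]
    rw [Finset.sum_comm]
  rcases le_or_gt 3 p with h3 | h3
  · -- three rows indexed by the `inl` part
    have idx : ∀ s t : Fin p, ∀ j,
        Q (e (Sum.inl s)) ⬝ᵥ (ringC j).mulVec (Q (e (Sum.inl t))) = 0 := by
      intro s t j
      rw [hentry, hblk j]
      simp [Matrix.submatrix_apply]
    refine three_rows Q hQ (e (Sum.inl ⟨0, by omega⟩)) (e (Sum.inl ⟨1, by omega⟩))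
      (e (Sum.inl ⟨2, by omega⟩)) ?_ ?_ ?_ (idx _ _) (idx _ _) (idx _ _) <;>
      · intro h
        have := e.injective h
        simp [Sum.inl.injEq, Fin.mk.injEq] at this
  · -- then 5 - p ≥ 3 : three rows indexed by the `inr` part
    have h3' : 3 ≤ 5 - p := by omega
    have idx : ∀ s t : Fin (5 - p), ∀ j,
        Q (e (Sum.inr s)) ⬝ᵥ (ringC j).mulVec (Q (e (Sum.inr t))) = 0 := by
      intro s t j
      rw [hentry, hblk j]
      simp [Matrix.submatrix_apply]
    refine three_rows Q hQ (e (Sum.inr ⟨0, by omega⟩)) (e (Sum.inr ⟨1, by omega⟩))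
      (e (Sum.inr ⟨2, by omega⟩)) ?_ ?_ ?_ (idx _ _) (idx _ _) (idx _ _) <;>
      · intro h
        have := e.injective h
        simp [Sum.inr.injEq, Fin.mk.injEq] at this

end Stmt17
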